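/- The clobber position oxoxoxoxo (alternating path of length 9 with o at both ends) is equivalent to the clobber position ooxo. -/

import Mathlib

namespace SetTheory

universe u

/-- Conway's pre-games, as in the removed `SetTheory.PGame` of Mathlib (Dec 2024). -/
inductive PGame : Type (u + 1)
  | mk : ∀ α β : Type u, (α → PGame) → (β → PGame) → PGame

namespace PGame

/-- The pair (`x ≤ y`, `x ⧏ y`), defined by simultaneous recursion as in old Mathlib:
`x ≤ y ↔ (∀ i, xL i ⧏ y) ∧ ∀ j, x ⧏ yR j` and `x ⧏ y ↔ (∃ i, x ≤ yL i) ∨ ∃ j, xR j ≤ y`. -/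
noncomputable def leLF (x : PGame.{u}) : PGame.{u} → Prop × Prop :=
  PGame.rec (motive := fun _ => PGame.{u} → Prop × Prop)
    (fun xl xr xL xR IHxl IHxr y =>
      PGame.rec (motive := fun _ => Prop × Prop)
        (fun yl yr yL yR IHyl IHyr =>
          ((∀ i, (IHxl i (mk yl yr yL yR)).2) ∧ ∀ j, (IHyr j).2,
            (∃ i, (IHyl i).1) ∨ ∃ j, (IHxr j (mk yl yr yL yR)).1))
        y)
    x

noncomputable instance : LE PGame.{u} := ⟨fun x y => (leLF x y).1⟩

def Equiv (x y : PGame.{u}) : Prop := x ≤ y ∧ y ≤ x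

instance : Zero PGame.{u} := ⟨⟨PEmpty, PEmpty, PEmpty.elim, PEmpty.elim⟩⟩

def ofLists (L R : List PGame.{u}) : PGame.{u} :=
  mk (ULift (Fin L.length)) (ULift (Fin R.length)) (fun i => L.get i.down) fun j => R.get j.down

instance : HasEquiv PGame.{u} := ⟨Equiv⟩

end PGame

end SetTheory

namespace SetTheory
namespace PGame

def LeftMoves : PGame.{u} → Type u
  | mk l _ _ _ => l

def RightMoves : PGame.{u} → Type u
  | mk _ r _ _ => r

def moveLeft : ∀ g : PGame.{u}, LeftMoves g → PGame.{u}
  | mk _l _ L _ => L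

def moveRight : ∀ g : PGame.{u}, RightMoves g → PGame.{u}
  | mk _ _r _ R => R

def LF (x y : PGame.{u}) : Prop := (leLF x y).2

infixl:50 " ⧏ " => PGame.LF

instance isEmpty_zero_leftMoves : IsEmpty (LeftMoves (0 : PGame.{u})) :=
  inferInstanceAs (IsEmpty PEmpty)

instance isEmpty_zero_rightMoves : IsEmpty (RightMoves (0 : PGame.{u})) :=
  inferInstanceAs (IsEmpty PEmpty)

theorem le_iff_forall_lf {x y : PGame.{u}} :
    x ≤ y ↔ (∀ i, x.moveLeft i ⧏ y) ∧ ∀ j, x ⧏ y.moveRight j := by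
  cases x; cases y; exact Iff.rfl

theorem lf_iff_exists_le {x y : PGame.{u}} :
    x ⧏ y ↔ (∃ i, x ≤ y.moveLeft i) ∨ ∃ j, x.moveRight j ≤ y := by
  cases x; cases y; exact Iff.rfl

theorem le_refl_and_lf_irrefl (x : PGame.{u}) : x ≤ x ∧ ¬ x ⧏ x := by
  induction x with
  | mk l r L R ihL ihR =>
    have h1 : mk l r L R ≤ mk l r L R := by
      rw [le_iff_forall_lf]
      refine ⟨fun i => ?_, fun j => ?_⟩
      · rw [lf_iff_exists_le]; exact Or.inl ⟨i, (ihL i).1⟩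
      · rw [lf_iff_exists_le]; exact Or.inr ⟨j, (ihR j).1⟩
    refine ⟨h1, fun h => ?_⟩
    rw [lf_iff_exists_le] at h
    rcases h with ⟨i, hi⟩ | ⟨j, hj⟩
    · rw [le_iff_forall_lf] at hi
      exact (ihL i).2 (hi.1 i)
    · rw [le_iff_forall_lf] at hj
      exact (ihR j).2 (hj.2 j)

theorem lf_irrefl (x : PGame.{u}) : ¬ x ⧏ x := (le_refl_and_lf_irrefl x).2

@[simp]
theorem le_refl (x : PGame.{u}) : x ≤ x := (le_refl_and_lf_irrefl x).1

theorem ofLists_moveLeft {L R : List PGame.{u}} (i : Fin L.length) :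
    (ofLists L R).moveLeft (ULift.up i) = L.get i := rfl

theorem ofLists_moveRight {L R : List PGame.{u}} (i : Fin R.length) :
    (ofLists L R).moveRight (ULift.up i) = R.get i := rfl

theorem ofLists_moveLeft' {L R : List PGame.{u}} (i : (ofLists L R).LeftMoves) :
    (ofLists L R).moveLeft i = L[(ULift.down (α := Fin L.length) i).val] := rfl

theorem ofLists_moveRight' {L R : List PGame.{u}} (i : (ofLists L R).RightMoves) :
    (ofLists L R).moveRight i = R[(ULift.down (α := Fin R.length) i).val] := rfl

end PGame
end SetTheory

open SetTheory PGame

inductive Cell | x | o | e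
deriving DecidableEq

abbrev Pos := List Cell

/-- All positions reachable by one move of the player with stones `me`
clobbering an adjacent stone of the opponent `opp`. -/
def movesAux (me opp : Cell) : Pos → List Pos
  | a :: b :: rest =>
      (if a = me ∧ b = opp then [Cell.e :: me :: rest] else []) ++
      (if a = opp ∧ b = me then [me :: Cell.e :: rest] else []) ++
      (movesAux me opp (b :: rest)).map (a :: ·)
  | _ => []

def leftMoves (p : Pos) : List Pos := movesAux Cell.x Cell.o p
def rightMoves (p : Pos) : List Pos := movesAux Cell.o Cell.x p

def stones (p : Pos) : Nat := p.countP (· != Cell.e)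

/-- Game value of a clobber position, via fuel recursion (each move removes one stone). -/
def valueFuel : Nat → Pos → PGame
  | 0, _ => 0
  | n+1, p => PGame.ofLists ((leftMoves p).map (valueFuel n)) ((rightMoves p).map (valueFuel n))

def value (p : Pos) : PGame := valueFuel (stones p) p

/-! ### Auxiliary boolean decision procedure -/

/-- Boolean version of `valueFuel m x ≤ valueFuel n y` (flag `true`) and of
`valueFuel m x ⧏ valueFuel n y` (flag `false`), structurally recursive on a fuel `k ≥ m + n`. -/
def auxB : Nat → Bool → Nat → Nat → Pos → Pos → Bool
  | 0, b, _, _, _, _ => b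
  | k+1, true, m, n, x, y =>
      (match m with
       | 0 => true
       | m'+1 => (leftMoves x).all fun x' => auxB k false m' n x' y) &&
      (match n with
       | 0 => true
       | n'+1 => (rightMoves y).all fun y' => auxB k false m n' x y')
  | k+1, false, m, n, x, y =>
      (match n with
       | 0 => false
       | n'+1 => (leftMoves y).any fun y' => auxB k true m n' x y') ||
      (match m with
       | 0 => false
       | m'+1 => (rightMoves x).any fun x' => auxB k true m' n x' y)

universe u

private lemma forall_moveLeft_ofLists {α : Type} (l : List α) (f : α → PGame.{u})
    (R : List PGame.{u}) (P : PGame.{u} → Prop) :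
    (∀ i, P ((PGame.ofLists (l.map f) R).moveLeft i)) ↔ ∀ a ∈ l, P (f a) := by
  constructor
  · intro h a ha
    obtain ⟨i, hi, rfl⟩ := List.mem_iff_getElem.mp ha
    have := h (ULift.up ⟨i, by simpa using hi⟩)
    rw [PGame.ofLists_moveLeft] at this; simpa using this
  · intro h i
    rw [PGame.ofLists_moveLeft', List.getElem_map]
    exact h _ (List.getElem_mem _)

private lemma forall_moveRight_ofLists {α : Type} (l : List α) (f : α → PGame.{u})
    (L : List PGame.{u}) (P : PGame.{u} → Prop) :
    (∀ j, P ((PGame.ofLists L (l.map f)).moveRight j)) ↔ ∀ a ∈ l, P (f a) := by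
  constructor
  · intro h a ha
    obtain ⟨i, hi, rfl⟩ := List.mem_iff_getElem.mp ha
    have := h (ULift.up ⟨i, by simpa using hi⟩)
    rw [PGame.ofLists_moveRight] at this; simpa using this
  · intro h j
    rw [PGame.ofLists_moveRight', List.getElem_map]
    exact h _ (List.getElem_mem _)

private lemma exists_moveLeft_ofLists {α : Type} (l : List α) (f : α → PGame.{u})
    (R : List PGame.{u}) (P : PGame.{u} → Prop) :
    (∃ i, P ((PGame.ofLists (l.map f) R).moveLeft i)) ↔ ∃ a ∈ l, P (f a) := by
  constructor
  · rintro ⟨i, hi⟩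
    rw [PGame.ofLists_moveLeft', List.getElem_map] at hi
    exact ⟨_, List.getElem_mem _, hi⟩
  · rintro ⟨a, ha, hP⟩
    obtain ⟨i, hi, rfl⟩ := List.mem_iff_getElem.mp ha
    refine ⟨ULift.up ⟨i, by simpa using hi⟩, ?_⟩
    rw [PGame.ofLists_moveLeft]; simpa using hP

private lemma exists_moveRight_ofLists {α : Type} (l : List α) (f : α → PGame.{u})
    (L : List PGame.{u}) (P : PGame.{u} → Prop) :
    (∃ j, P ((PGame.ofLists L (l.map f)).moveRight j)) ↔ ∃ a ∈ l, P (f a) := by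
  constructor
  · rintro ⟨j, hj⟩
    rw [PGame.ofLists_moveRight', List.getElem_map] at hj
    exact ⟨_, List.getElem_mem _, hj⟩
  · rintro ⟨a, ha, hP⟩
    obtain ⟨i, hi, rfl⟩ := List.mem_iff_getElem.mp ha
    refine ⟨ULift.up ⟨i, by simpa using hi⟩, ?_⟩
    rw [PGame.ofLists_moveRight]; simpa using hP

private lemma auxB_correct :
    ∀ k m n (x y : Pos), m + n ≤ k →
      ((auxB k true m n x y = true ↔ valueFuel.{u} m x ≤ valueFuel.{u} n y) ∧
       (auxB k false m n x y = true ↔ valueFuel.{u} m x ⧏ valueFuel.{u} n y)) := by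
  intro k
  induction k with
  | zero =>
    intro m n x y h
    obtain ⟨rfl, rfl⟩ : m = 0 ∧ n = 0 := by omega
    constructor
    · simp [auxB, valueFuel]
    · simp only [auxB, valueFuel]
      simp [PGame.lf_irrefl]
  | succ k ih =>
    intro m n x y hk
    constructor
    · rw [PGame.le_iff_forall_lf]
      show (_ && _) = true ↔ _
      rw [Bool.and_eq_true]
      apply and_congr
      · cases m with
        | zero => simp [valueFuel]
        | succ m' =>
          simp only [List.all_eq_true, valueFuel]
          refine Iff.trans ?_ (forall_moveLeft_ofLists (leftMoves x) (valueFuel m')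
            ((rightMoves x).map (valueFuel m')) (· ⧏ valueFuel n y)).symm
          exact forall_congr' fun a => forall_congr' fun ha => (ih m' n a y (by omega)).2
      · cases n with
        | zero => simp [valueFuel]
        | succ n' =>
          simp only [List.all_eq_true, valueFuel]
          refine Iff.trans ?_ (forall_moveRight_ofLists (rightMoves y) (valueFuel n')
            ((leftMoves y).map (valueFuel n')) (valueFuel m x ⧏ ·)).symm
          exact forall_congr' fun a => forall_congr' fun ha => (ih m n' x a (by omega)).2
    · rw [PGame.lf_iff_exists_le]
      show (_ || _) = true ↔ _
      rw [Bool.or_eq_true]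
      apply or_congr
      · cases n with
        | zero => simp [valueFuel]
        | succ n' =>
          simp only [List.any_eq_true, valueFuel]
          refine Iff.trans ?_ (exists_moveLeft_ofLists (leftMoves y) (valueFuel n')
            ((rightMoves y).map (valueFuel n')) (valueFuel m x ≤ ·)).symm
          exact exists_congr fun a => and_congr_right fun ha => (ih m n' x a (by omega)).1
      · cases m with
        | zero => simp [valueFuel]
        | succ m' =>
          simp only [List.any_eq_true, valueFuel]
          refine Iff.trans ?_ (exists_moveRight_ofLists (rightMoves x) (valueFuel m')
            ((leftMoves x).map (valueFuel m')) (· ≤ valueFuel n y)).symm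
          exact exists_congr fun a => and_congr_right fun ha => (ih m' n a y (by omega)).1

private lemma leB_iff (m n : Nat) (x y : Pos) :
    auxB (m + n) true m n x y = true ↔ valueFuel.{u} m x ≤ valueFuel.{u} n y :=
  (auxB_correct (m + n) m n x y le_rfl).1

/-- The clobber position `oxoxoxoxo` is equivalent to `ooxo`. -/
theorem oxoxoxoxo_equiv_ooxo :
    value [Cell.o, Cell.x, Cell.o, Cell.x, Cell.o, Cell.x, Cell.o, Cell.x, Cell.o] ≈
      value [Cell.o, Cell.o, Cell.x, Cell.o] := by
  constructor
  · rw [value, value, ← leB_iff]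
    decide
  · rw [value, value, ← leB_iff]
    decide
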